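/- Assume f is curved. Let u^c ∈ ∂C(0) be such that all coordinates of u^c outside J(u^c) vanish (i.e. u^c = Σ_{j∈J(u^c)} u^c_j ψ_j with u^c_j = ±τ/2), and let τ' > 0. Then the map h'(u, λ) = u^c + λ(u − u^c) is a well-defined bijection from SSAT({u^c},{1}) × (0, τ'] onto SSAT({u^c},(0, τ']), and h' is Lipschitz. -/

import Mathlib

open MeasureTheory Filter Set
open scoped Classical

noncomputable section

/-- The ambient space `ℝ^N` with the Euclidean structure. -/
abbrev Euc (N : ℕ) := EuclideanSpace ℝ (Fin N)

variable {N : ℕ}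

/-- The cell `C((k_i))` : points whose coordinates in the basis `ψ` satisfy
`τ(k_i - 1/2) ≤ u_i ≤ τ(k_i + 1/2)`. -/
def cube (ψ : Module.Basis (Fin N) ℝ (Euc N)) (τ : ℝ) (k : Fin N → ℤ) : Set (Euc N) :=
  {u | ∀ i, τ * ((k i : ℝ) - 1/2) ≤ ψ.repr u i ∧ ψ.repr u i ≤ τ * ((k i : ℝ) + 1/2)}

/-- The central cell `C(0)`. -/
def cube0 (ψ : Module.Basis (Fin N) ℝ (Euc N)) (τ : ℝ) : Set (Euc N) := cube ψ τ 0

/-- The set of active (saturated) coordinates `J(u)` for `u ∈ C(0)`. -/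
def Jset (ψ : Module.Basis (Fin N) ℝ (Euc N)) (τ : ℝ) (u : Euc N) : Set (Fin N) :=
  {i | ψ.repr u i = τ / 2 ∨ ψ.repr u i = -(τ / 2)}

/-- `sol` is the solution map of the problems `(P)(u)` : `sol u` minimizes `f(v - u)` over
`C(0)`.  (Under the hypotheses on `f` the minimizer is unique.) -/
def IsSol (ψ : Module.Basis (Fin N) ℝ (Euc N)) (τ : ℝ) (f : Euc N → ℝ) (sol : Euc N → Euc N) : Prop :=
  ∀ u, sol u ∈ cube0 ψ τ ∧ IsMinOn (fun v => f (v - u)) (cube0 ψ τ) (sol u)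

/-- `SSAT(C, A)` : the set of data `u` whose solution `sol u` lies in `C` and with
`f_d(u - sol u) ∈ A`. -/
def SSAT (sol : Euc N → Euc N) (fd : Euc N → ℝ) (C : Set (Euc N)) (A : Set ℝ) : Set (Euc N) :=
  {u | sol u ∈ C ∧ fd (u - sol u) ∈ A}

/-- `f` is a norm. -/
structure IsNormLike (f : Euc N → ℝ) : Prop where
  add_le : ∀ x y, f (x + y) ≤ f x + f y
  smul_eq : ∀ (c : ℝ) (x), f (c • x) = |c| * f x
  eq_zero_iff : ∀ x, f x = 0 ↔ x = 0

/-- `f` is a norm, continuously differentiable away from `0`, with strictly convex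
level sets. -/
structure GoodNorm (f : Euc N → ℝ) : Prop where
  add_le : ∀ x y, f (x + y) ≤ f x + f y
  smul_eq : ∀ (c : ℝ) (x), f (c • x) = |c| * f x
  eq_zero_iff : ∀ x, f x = 0 ↔ x = 0
  smooth : ∀ x : Euc N, x ≠ 0 → ContDiffAt ℝ 1 f x
  sconv : StrictConvex ℝ {x : Euc N | f x ≤ 1}

/-- `f` is curved : the normalized-gradient map `h : {f = 1} → S^{N-1}`,
`h(u) = ∇f(u)/‖∇f(u)‖₂`, is a bijection whose inverse is Lipschitz. -/
def Curved (f : Euc N → ℝ) : Prop :=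
  ∃ (L : NNReal) (g : Euc N → Euc N),
    LipschitzOnWith L g (Metric.sphere (0 : Euc N) 1) ∧
    (∀ u : Euc N, f u = 1 → g (‖gradient f u‖⁻¹ • gradient f u) = u) ∧
    ∀ w ∈ Metric.sphere (0 : Euc N) 1, ∃ u, f u = 1 ∧ ‖gradient f u‖⁻¹ • gradient f u = w

/-- The projection `p` onto `Span(ψ_j : j ∈ J)` along the other basis vectors. -/
def pJ (ψ : Module.Basis (Fin N) ℝ (Euc N)) (J : Set (Fin N)) (x : Euc N) : Euc N :=
  ∑ j : Fin N, if j ∈ J then ψ.repr x j • ψ j else 0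

/-- The "center" `u^c` of the face of `u` : keep the saturated coordinates, zero out
the others. -/
def ucOf (ψ : Module.Basis (Fin N) ℝ (Euc N)) (τ : ℝ) (u : Euc N) : Euc N :=
  pJ ψ (Jset ψ τ u) u

/-- The equivalence class `ū` of `u` in `C(0)` : same active set. -/
def ubar (ψ : Module.Basis (Fin N) ℝ (Euc N)) (τ : ℝ) (u : Euc N) : Set (Euc N) :=
  {w ∈ cube0 ψ τ | Jset ψ τ w = Jset ψ τ u}

/-- The discrete grid `D = τ ℤ^N` (in the basis `ψ`). -/
def Dgrid (ψ : Module.Basis (Fin N) ℝ (Euc N)) (τ : ℝ) : Set (Euc N) :=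
  {x | ∃ k : Fin N → ℤ, x = ∑ i, (τ * (k i : ℝ)) • ψ i}

/-- The slice `Dom((k_j)_{j∈J})` of the grid : grid points whose `J`-coordinates are
the prescribed `τ k_j`. -/
def DomSlice (ψ : Module.Basis (Fin N) ℝ (Euc N)) (τ : ℝ) (J : Set (Fin N)) (k : Fin N → ℤ) :
    Set (Euc N) :=
  {x ∈ Dgrid ψ τ | ∀ j ∈ J, ψ.repr x j = τ * (k j : ℝ)}

/-- The grid `τ ℤ^J` inside `Span(ψ_j : j ∈ J)`. -/
def JgridJ (ψ : Module.Basis (Fin N) ℝ (Euc N)) (τ : ℝ) (J : Set (Fin N)) : Set (Euc N) :=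
  {x | ∃ k : Fin N → ℤ, x = ∑ j : Fin N, if j ∈ J then (τ * (k j : ℝ)) • ψ j else 0}

/-- `Leb_K(S)` : the Lebesgue measure (in `ℝ^{#J}`) of the set of `J`-indexed coordinate
families whose combination lies in `S`. -/
def lebJ (ψ : Module.Basis (Fin N) ℝ (Euc N)) (J : Set (Fin N)) (S : Set (Euc N)) : ENNReal :=
  volume {a : ↥J → ℝ | (∑ j : ↥J, a j • ψ (j : Fin N)) ∈ S}

/-- The set `C_K` of centers of the faces of codimension `K`. -/
def CKset (ψ : Module.Basis (Fin N) ℝ (Euc N)) (τ : ℝ) (K : ℕ) : Set (Euc N) :=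
  {x | ∃ (J : Set (Fin N)) (ε : Fin N → ℝ), J.ncard = K ∧ (∀ j ∈ J, ε j = 1 ∨ ε j = -1) ∧
    x = ∑ j : Fin N, if j ∈ J then (ε j * (τ / 2)) • ψ j else 0}

/-- The set `Cl_K` of boundary points of `C(0)` with exactly `K` active constraints. -/
def ClKset (ψ : Module.Basis (Fin N) ℝ (Euc N)) (τ : ℝ) (K : ℕ) : Set (Euc N) :=
  {u | u ∈ frontier (cube0 ψ τ) ∧ (Jset ψ τ u).ncard = K}

/-- `k_i(u)` : the unique integer with `τ(k_i - 1/2) ≤ u_i < τ(k_i + 1/2)`. -/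
def kfun (ψ : Module.Basis (Fin N) ℝ (Euc N)) (τ : ℝ) (u : Euc N) (i : Fin N) : ℤ :=
  ⌊ψ.repr u i / τ + 1 / 2⌋

/-- The grid point `τ Σ k_i(u) ψ_i` approximating `u`. -/
def gridpt (ψ : Module.Basis (Fin N) ℝ (Euc N)) (τ : ℝ) (u : Euc N) : Euc N :=
  ∑ i, (τ * (kfun ψ τ u i : ℝ)) • ψ i

/-- `J̃(u)` : the active set of the solution of `(P)` at the grid point of `u`. -/
def Jtil (ψ : Module.Basis (Fin N) ℝ (Euc N)) (τ : ℝ) (sol : Euc N → Euc N) (u : Euc N) :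
    Set (Fin N) :=
  Jset ψ τ (sol (gridpt ψ τ u))

section StmtFiveAux

variable {N : ℕ}

lemma IsNormLike.zero' {f : Euc N → ℝ} (hf : IsNormLike f) : f 0 = 0 :=
  (hf.eq_zero_iff 0).2 rfl

lemma IsNormLike.neg_eq' {f : Euc N → ℝ} (hf : IsNormLike f) (x : Euc N) : f (-x) = f x := by
  simpa using hf.smul_eq (-1) x

lemma IsNormLike.nonneg' {f : Euc N → ℝ} (hf : IsNormLike f) (x : Euc N) : 0 ≤ f x := by
  have h := hf.add_le x (-x)
  rw [add_neg_cancel, hf.zero', hf.neg_eq'] at h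
  linarith

lemma GoodNorm.isNormLike' {f : Euc N → ℝ} (hf : GoodNorm f) : IsNormLike f :=
  ⟨hf.add_le, hf.smul_eq, hf.eq_zero_iff⟩

lemma convex_cube0 (ψ : Module.Basis (Fin N) ℝ (Euc N)) (τ : ℝ) : Convex ℝ (cube0 ψ τ) := by
  intro x hx y hy a b ha hb hab
  intro i
  have hx' := hx i
  have hy' := hy i
  have hrepr : ψ.repr (a • x + b • y) i = a * ψ.repr x i + b * ψ.repr y i := by
    simp
  constructor
  · rw [hrepr]
    have h1 : a * (τ * (((0 : Fin N → ℤ) i : ℝ) - 1/2)) ≤ a * ψ.repr x i :=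
      mul_le_mul_of_nonneg_left hx'.1 ha
    have h2 : b * (τ * (((0 : Fin N → ℤ) i : ℝ) - 1/2)) ≤ b * ψ.repr y i :=
      mul_le_mul_of_nonneg_left hy'.1 hb
    have h3 : a * (τ * (((0 : Fin N → ℤ) i : ℝ) - 1/2))
        + b * (τ * (((0 : Fin N → ℤ) i : ℝ) - 1/2)) = τ * (((0 : Fin N → ℤ) i : ℝ) - 1/2) := by
      rw [← add_mul, hab, one_mul]
    linarith
  · rw [hrepr]
    have h1 : a * ψ.repr x i ≤ a * (τ * (((0 : Fin N → ℤ) i : ℝ) + 1/2)) :=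
      mul_le_mul_of_nonneg_left hx'.2 ha
    have h2 : b * ψ.repr y i ≤ b * (τ * (((0 : Fin N → ℤ) i : ℝ) + 1/2)) :=
      mul_le_mul_of_nonneg_left hy'.2 hb
    have h3 : a * (τ * (((0 : Fin N → ℤ) i : ℝ) + 1/2))
        + b * (τ * (((0 : Fin N → ℤ) i : ℝ) + 1/2)) = τ * (((0 : Fin N → ℤ) i : ℝ) + 1/2) := by
      rw [← add_mul, hab, one_mul]
    linarith

lemma interior_unitball_lt {f : Euc N → ℝ} (hnl : IsNormLike f) {y : Euc N}
    (hy : y ∈ interior {x : Euc N | f x ≤ 1}) : f y < 1 := by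
  by_cases hy0 : y = 0
  · rw [hy0, hnl.zero']; norm_num
  · rcases Metric.isOpen_iff.1 isOpen_interior y hy with ⟨ε, hε, hball⟩
    have hy' : (0:ℝ) < ‖y‖ := norm_pos_iff.2 hy0
    set δ : ℝ := ε / (2 * ‖y‖) with hδdef
    have hδ : 0 < δ := div_pos hε (by positivity)
    have hdist : dist ((1 + δ) • y) y < ε := by
      rw [dist_eq_norm]
      have : (1 + δ) • y - y = δ • y := by
        rw [add_smul, one_smul]; abel
      rw [this, norm_smul, Real.norm_eq_abs, abs_of_pos hδ, hδdef]
      rw [div_mul_eq_mul_div, div_lt_iff₀ (by positivity)]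
      nlinarith
    have hmem : (1 + δ) • y ∈ {x : Euc N | f x ≤ 1} :=
      interior_subset (hball (Metric.mem_ball.2 hdist))
    have heval : f ((1 + δ) • y) = (1 + δ) * f y := by
      rw [hnl.smul_eq, abs_of_pos (by linarith)]
    have h1 : (1 + δ) * f y ≤ 1 := by rw [← heval]; exact hmem
    have h0 : 0 ≤ f y := hnl.nonneg' y
    nlinarith

lemma minOn_unique {f : Euc N → ℝ} (hf : GoodNorm f) {C : Set (Euc N)} (hC : Convex ℝ C)
    {u v1 v2 : Euc N} (h1C : v1 ∈ C) (h2C : v2 ∈ C)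
    (h1 : IsMinOn (fun v => f (v - u)) C v1) (h2 : IsMinOn (fun v => f (v - u)) C v2) :
    v1 = v2 := by
  by_contra hne
  have hnl := hf.isNormLike'
  have heq : f (v1 - u) = f (v2 - u) := le_antisymm (h1 h2C) (h2 h1C)
  set m := f (v1 - u) with hm
  have hm0 : 0 ≤ m := hnl.nonneg' _
  rcases eq_or_lt_of_le hm0 with h0 | hpos
  · have e1 : v1 - u = 0 := (hf.eq_zero_iff _).1 h0.symm
    have e2 : v2 - u = 0 := (hf.eq_zero_iff _).1 (by rw [← heq]; exact h0.symm)
    rw [sub_eq_zero] at e1 e2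
    exact hne (e1.trans e2.symm)
  · set z1 := m⁻¹ • (v1 - u) with hz1def
    set z2 := m⁻¹ • (v2 - u) with hz2def
    have hminv : (0:ℝ) < m⁻¹ := inv_pos.2 hpos
    have hz1 : z1 ∈ {x : Euc N | f x ≤ 1} := by
      simp only [hz1def, Set.mem_setOf_eq, hnl.smul_eq, abs_of_pos hminv, ← hm]
      rw [inv_mul_cancel₀ (ne_of_gt hpos)]
    have hz2 : z2 ∈ {x : Euc N | f x ≤ 1} := by
      simp only [hz2def, Set.mem_setOf_eq, hnl.smul_eq, abs_of_pos hminv, ← heq, ← hm]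
      rw [inv_mul_cancel₀ (ne_of_gt hpos)]
    have hz12 : z1 ≠ z2 := by
      intro hzz
      apply hne
      have := smul_right_injective (Euc N) (ne_of_gt hminv) hzz
      exact sub_left_inj.1 this
    have hmid := hf.sconv hz1 hz2 hz12 (by norm_num : (0:ℝ) < 1/2)
      (by norm_num : (0:ℝ) < 1/2) (by norm_num)
    have hlt : f ((1/2 : ℝ) • z1 + (1/2 : ℝ) • z2) < 1 := interior_unitball_lt hnl hmid
    set w := (1/2 : ℝ) • v1 + (1/2 : ℝ) • v2 with hwdef
    have hwC : w ∈ C := hC h1C h2C (by norm_num) (by norm_num) (by norm_num)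
    have hz1' : m • z1 = v1 - u := by
      rw [hz1def, smul_smul, mul_inv_cancel₀ (ne_of_gt hpos), one_smul]
    have hz2' : m • z2 = v2 - u := by
      rw [hz2def, smul_smul, mul_inv_cancel₀ (ne_of_gt hpos), one_smul]
    have hwkey : w - u = m • ((1/2 : ℝ) • z1 + (1/2 : ℝ) • z2) := by
      have : m • ((1/2 : ℝ) • z1 + (1/2 : ℝ) • z2)
          = (1/2 : ℝ) • (m • z1) + (1/2 : ℝ) • (m • z2) := by module
      rw [this, hz1', hz2', hwdef]
      module
    have hlt2 : f (w - u) < m := by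
      rw [hwkey, hnl.smul_eq, abs_of_pos hpos]
      nlinarith
    have hcontr : m ≤ f (w - u) := h1 hwC
    linarith

lemma transfer_min {f : Euc N → ℝ} (hnl : IsNormLike f) {C : Set (Euc N)} (hC : Convex ℝ C)
    {uc : Euc N} (hucC : uc ∈ C) (x : Euc N) {t : ℝ} (ht : 0 < t)
    (h : IsMinOn (fun v => f (v - (uc + x))) C uc) :
    IsMinOn (fun v => f (v - (uc + t • x))) C uc := by
  rw [isMinOn_iff] at h ⊢
  intro v hv
  have e0 : uc - (uc + x) = -x := by abel
  have e0t : uc - (uc + t • x) = -(t • x) := by abel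
  have hbase : f (-x) ≤ f (v - (uc + x)) := by rw [← e0]; exact h v hv
  rw [e0t]
  have hnegt : f (-(t • x)) = t * f (-x) := by
    rw [show -(t • x) = t • (-x) by module, hnl.smul_eq, abs_of_pos ht]
  rw [hnegt]
  rcases le_or_gt t 1 with htle | htgt
  · -- small t : convexity trick
    have e : (v - (uc + t • x)) + (1 - t) • (-x) = v - (uc + x) := by module
    have key := hnl.add_le (v - (uc + t • x)) ((1 - t) • (-x))
    rw [e, hnl.smul_eq, abs_of_nonneg (by linarith)] at key
    linarith
  · -- large t : scale back into C
    have ht1 : (0:ℝ) < t⁻¹ := inv_pos.2 ht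
    have h1t : t⁻¹ ≤ 1 := by
      rw [← one_div, div_le_one ht]; linarith
    have hcomb : uc + t⁻¹ • (v - uc) ∈ C := by
      have hmem := hC hucC hv (by linarith : (0:ℝ) ≤ 1 - t⁻¹) (le_of_lt ht1) (by ring)
      convert hmem using 1
      module
    have hbase2 : f (-x) ≤ f ((uc + t⁻¹ • (v - uc)) - (uc + x)) := by
      rw [← e0]; exact h _ hcomb
    have e3 : t • ((uc + t⁻¹ • (v - uc)) - (uc + x)) = v - (uc + t • x) := by
      have h1 : t • (t⁻¹ • (v - uc)) = v - uc := by
        rw [smul_smul, mul_inv_cancel₀ (ne_of_gt ht), one_smul]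
      calc t • ((uc + t⁻¹ • (v - uc)) - (uc + x))
          = t • (t⁻¹ • (v - uc)) - t • x := by module
        _ = (v - uc) - t • x := by rw [h1]
        _ = v - (uc + t • x) := by abel
    rw [← e3, hnl.smul_eq, abs_of_pos ht]
    exact mul_le_mul_of_nonneg_left hbase2 (le_of_lt ht)

lemma sol_ray {ψ : Module.Basis (Fin N) ℝ (Euc N)} {τ : ℝ} {f : Euc N → ℝ} (hf : GoodNorm f)
    {sol : Euc N → Euc N} (hsol : IsSol ψ τ f sol) {uc u : Euc N} (h : sol u = uc)
    {t : ℝ} (ht : 0 < t) : sol (uc + t • (u - uc)) = uc := by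
  have hC := convex_cube0 ψ τ
  have hucC : uc ∈ cube0 ψ τ := h ▸ (hsol u).1
  have hmin : IsMinOn (fun v => f (v - (uc + (u - uc)))) (cube0 ψ τ) uc := by
    rw [show uc + (u - uc) = u by abel]
    rw [← h]
    exact (hsol u).2
  have hmin2 := transfer_min hf.isNormLike' hC hucC (u - uc) ht hmin
  exact minOn_unique hf hC (hsol _).1 hucC (hsol _).2 hmin2

lemma normlike_continuous {f : Euc N → ℝ} (hnl : IsNormLike f) : Continuous f := by
  have hconv : ConvexOn ℝ (Set.univ : Set (Euc N)) f := by
    refine ⟨convex_univ, ?_⟩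
    intro x _ y _ a b ha hb hab
    calc f (a • x + b • y) ≤ f (a • x) + f (b • y) := hnl.add_le _ _
      _ = a * f x + b * f y := by
          rw [hnl.smul_eq, hnl.smul_eq, abs_of_nonneg ha, abs_of_nonneg hb]
  have h := hconv.continuousOn isOpen_univ
  exact continuousOn_univ.1 h

lemma normlike_lower (hN : 1 ≤ N) {f : Euc N → ℝ} (hnl : IsNormLike f) :
    ∃ c : ℝ, 0 < c ∧ ∀ x, c * ‖x‖ ≤ f x := by
  have hcont := normlike_continuous hnl
  haveI : Nonempty (Fin N) := ⟨⟨0, hN⟩⟩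
  haveI : Nontrivial (Euc N) := by
    refine ⟨⟨EuclideanSpace.single ⟨0, hN⟩ (1:ℝ), 0, ?_⟩⟩
    intro hzero
    have := congrArg (fun z => ‖z‖) hzero
    simp [EuclideanSpace.norm_single] at this
  have hne : (Metric.sphere (0 : Euc N) 1).Nonempty :=
    NormedSpace.sphere_nonempty.2 zero_le_one
  obtain ⟨x0, hx0S, hx0min⟩ :=
    (isCompact_sphere (0 : Euc N) 1).exists_isMinOn hne hcont.continuousOn
  have hx0norm : ‖x0‖ = 1 := by simpa using hx0S
  have hx0ne : x0 ≠ 0 := by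
    intro hz; rw [hz] at hx0norm; simp at hx0norm
  have hc : 0 < f x0 := by
    rcases lt_or_eq_of_le (hnl.nonneg' x0) with h | h
    · exact h
    · exact absurd ((hnl.eq_zero_iff x0).1 h.symm) hx0ne
  refine ⟨f x0, hc, ?_⟩
  intro x
  by_cases hx : x = 0
  · simp [hx, hnl.zero']
  · have hxn : (0:ℝ) < ‖x‖ := norm_pos_iff.2 hx
    have hmem : ‖x‖⁻¹ • x ∈ Metric.sphere (0 : Euc N) 1 := by
      simp [norm_smul, abs_of_pos (inv_pos.2 hxn), inv_mul_cancel₀ (ne_of_gt hxn)]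
    have hmin : f x0 ≤ f (‖x‖⁻¹ • x) := hx0min hmem
    have heval : f (‖x‖⁻¹ • x) = ‖x‖⁻¹ * f x := by
      rw [hnl.smul_eq, abs_of_pos (inv_pos.2 hxn)]
    rw [heval] at hmin
    calc f x0 * ‖x‖ ≤ (‖x‖⁻¹ * f x) * ‖x‖ :=
          mul_le_mul_of_nonneg_right hmin (le_of_lt hxn)
      _ = f x := by field_simp

end StmtFiveAux

/-- for a face center `u^c`, the map `h'(u,λ) = u^c + λ(u - u^c)` is a
well-defined Lipschitz bijection from `SSAT({u^c},{1}) × (0,τ']` onto `SSAT({u^c},(0,τ'])`. -/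
theorem stmt5 {N : ℕ} (hN : 1 ≤ N) (ψ : Module.Basis (Fin N) ℝ (Euc N)) (τ : ℝ) (hτ : 0 < τ)
    (f : Euc N → ℝ) (hf : GoodNorm f) (hcurved : Curved f)
    (fd : Euc N → ℝ) (hfd : IsNormLike fd)
    (sol : Euc N → Euc N) (hsol : IsSol ψ τ f sol)
    (τ' : ℝ) (hτ' : 0 < τ')
    (uc : Euc N) (huc : uc ∈ frontier (cube0 ψ τ))
    (hucc : ∀ i, i ∉ Jset ψ τ uc → ψ.repr uc i = 0) :
    Set.BijOn (fun p : Euc N × ℝ => uc + p.2 • (p.1 - uc))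
        ((SSAT sol fd {uc} ({1} : Set ℝ)) ×ˢ Set.Ioc (0 : ℝ) τ')
        (SSAT sol fd {uc} (Set.Ioc 0 τ')) ∧
      ∃ L : NNReal, LipschitzOnWith L (fun p : Euc N × ℝ => uc + p.2 • (p.1 - uc))
        ((SSAT sol fd {uc} ({1} : Set ℝ)) ×ˢ Set.Ioc (0 : ℝ) τ') := by
  obtain ⟨c, hc, hlow⟩ := normlike_lower hN hfd
  set M : ℝ := c⁻¹ with hMdef
  have hM : 0 < M := inv_pos.2 hc
  have hbound : ∀ u ∈ SSAT sol fd {uc} ({1} : Set ℝ), ‖u - uc‖ ≤ M := by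
    intro u hu
    obtain ⟨hu1, hu2⟩ := hu
    rw [Set.mem_singleton_iff] at hu1
    rw [hu1, Set.mem_singleton_iff] at hu2
    have hl := hlow (u - uc)
    rw [hu2] at hl
    rw [hMdef, ← one_div, le_div_iff₀ hc]
    linarith [mul_comm c ‖u - uc‖]
  constructor
  · refine ⟨?_, ?_, ?_⟩
    · -- MapsTo
      rintro ⟨u, l⟩ ⟨hu, hl⟩
      obtain ⟨hu1, hu2⟩ := hu
      rw [Set.mem_singleton_iff] at hu1
      rw [hu1, Set.mem_singleton_iff] at hu2
      have hsolw : sol (uc + l • (u - uc)) = uc := sol_ray hf hsol hu1 hl.1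
      refine ⟨by rw [hsolw]; exact Set.mem_singleton uc, ?_⟩
      rw [hsolw, add_sub_cancel_left, hfd.smul_eq, abs_of_pos hl.1, hu2, mul_one]
      exact hl
    · -- InjOn
      rintro ⟨u1, l1⟩ ⟨hu1, hl1⟩ ⟨u2, l2⟩ ⟨hu2, hl2⟩ heq
      simp only [Prod.mk.injEq] at *
      have heq' : l1 • (u1 - uc) = l2 • (u2 - uc) := by
        have := congrArg (fun z => z - uc) heq
        simpa using this
      obtain ⟨ha1, hb1⟩ := hu1
      rw [Set.mem_singleton_iff] at ha1
      rw [ha1, Set.mem_singleton_iff] at hb1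
      obtain ⟨ha2, hb2⟩ := hu2
      rw [Set.mem_singleton_iff] at ha2
      rw [ha2, Set.mem_singleton_iff] at hb2
      have hfd1 : fd (l1 • (u1 - uc)) = l1 := by
        rw [hfd.smul_eq, abs_of_pos hl1.1, hb1, mul_one]
      have hfd2 : fd (l2 • (u2 - uc)) = l2 := by
        rw [hfd.smul_eq, abs_of_pos hl2.1, hb2, mul_one]
      have hll : l1 = l2 := by rw [← hfd1, ← hfd2, heq']
      have huu : u1 = u2 := by
        have h2 : l1 • (u1 - uc) = l1 • (u2 - uc) := by rw [heq', hll]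
        have h3 := smul_right_injective (Euc N) (ne_of_gt hl1.1) h2
        exact sub_left_inj.1 h3
      exact ⟨huu, hll⟩
    · -- SurjOn
      rintro w ⟨hw1, hw2⟩
      rw [Set.mem_singleton_iff] at hw1
      rw [hw1] at hw2
      set μ := fd (w - uc) with hμdef
      have hμ : 0 < μ := hw2.1
      have hsolu : sol (uc + μ⁻¹ • (w - uc)) = uc := sol_ray hf hsol hw1 (inv_pos.2 hμ)
      refine ⟨(uc + μ⁻¹ • (w - uc), μ), ⟨⟨?_, ?_⟩, hw2⟩, ?_⟩
      · rw [hsolu]; exact Set.mem_singleton uc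
      · rw [hsolu, Set.mem_singleton_iff, add_sub_cancel_left, hfd.smul_eq,
          abs_of_pos (inv_pos.2 hμ), ← hμdef, inv_mul_cancel₀ (ne_of_gt hμ)]
      · simp only
        rw [add_sub_cancel_left, smul_smul, mul_inv_cancel₀ (ne_of_gt hμ), one_smul]
        abel
  · -- Lipschitz
    refine ⟨Real.toNNReal (τ' + M), ?_⟩
    have hcoe : (Real.toNNReal (τ' + M) : ℝ) = τ' + M :=
      Real.coe_toNNReal _ (by positivity)
    apply LipschitzOnWith.of_dist_le_mul
    rintro ⟨u1, l1⟩ ⟨hu1, hl1⟩ ⟨u2, l2⟩ ⟨hu2, hl2⟩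
    simp only
    have hdist1 : dist (uc + l1 • (u1 - uc)) (uc + l2 • (u2 - uc))
        = ‖l1 • (u1 - uc) - l2 • (u2 - uc)‖ := by
      rw [dist_eq_norm]
      congr 1
      abel
    have hsplit : l1 • (u1 - uc) - l2 • (u2 - uc)
        = l1 • (u1 - u2) + (l1 - l2) • (u2 - uc) := by module
    have hb2 : ‖u2 - uc‖ ≤ M := hbound u2 hu2
    have hl1' : |l1| ≤ τ' := by
      rw [abs_of_pos hl1.1]; exact hl1.2
    calc dist (uc + l1 • (u1 - uc)) (uc + l2 • (u2 - uc))
        = ‖l1 • (u1 - u2) + (l1 - l2) • (u2 - uc)‖ := by rw [hdist1, hsplit]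
      _ ≤ ‖l1 • (u1 - u2)‖ + ‖(l1 - l2) • (u2 - uc)‖ := norm_add_le _ _
      _ = |l1| * ‖u1 - u2‖ + |l1 - l2| * ‖u2 - uc‖ := by
          rw [norm_smul, norm_smul, Real.norm_eq_abs, Real.norm_eq_abs]
      _ ≤ τ' * ‖u1 - u2‖ + |l1 - l2| * M := by
          gcongr
      _ ≤ τ' * dist (u1, l1) (u2, l2) + M * dist (u1, l1) (u2, l2) := by
          have h1 : ‖u1 - u2‖ ≤ dist (u1, l1) (u2, l2) := by
            rw [Prod.dist_eq]
            exact le_trans (le_of_eq (dist_eq_norm u1 u2).symm) (le_max_left _ _)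
          have h2 : |l1 - l2| ≤ dist (u1, l1) (u2, l2) := by
            rw [Prod.dist_eq]
            exact le_trans (le_of_eq (Real.dist_eq l1 l2).symm) (le_max_right _ _)
          have hd0 : (0:ℝ) ≤ dist (u1, l1) (u2, l2) := dist_nonneg
          nlinarith [abs_nonneg (l1 - l2), norm_nonneg (u1 - u2)]
      _ = ↑(Real.toNNReal (τ' + M)) * dist (u1, l1) (u2, l2) := by
          rw [hcoe]; ring
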